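/- For the fermionic pointlike interaction on the ring [-L/2, L/2] with periodic boundary conditions, the odd function φ^{[k]}(x) = sgn(x)cos(kx) + α(k) sin(kx) with α(k) = c/(2k) − kν²/2 satisfies φ'' + k²φ = 0 for x ≠ 0, the jump condition φ(0+) − φ(0−) = (4/(c − k²ν²))φ'(0) (with φ' continuous at 0), and periodicity, if and only if tan(kL/2) = −1/α(k). -/

import Mathlib

open MeasureTheory Filter Set Topology

theorem stmt16 (c ν k L : ℝ) (hk : 0 < k) (hL : 0 < L)
    (hreg : c - k^2*ν^2 ≠ 0)
    (α : ℝ) (hα : α = c/(2*k) - k*ν^2/2)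
    (φ : ℝ → ℝ)
    (hφ : ∀ x, φ x = Real.sign x * Real.cos (k*x) + α * Real.sin (k*x)) :
    ((∀ x, x ≠ 0 → deriv (deriv φ) x + k^2 * φ x = 0) ∧
     (∃ pP pM d : ℝ, Tendsto φ (𝓝[>] (0:ℝ)) (𝓝 pP) ∧
        Tendsto φ (𝓝[<] (0:ℝ)) (𝓝 pM) ∧
        Tendsto (deriv φ) (𝓝[≠] (0:ℝ)) (𝓝 d) ∧
        pP - pM = (4/(c - k^2*ν^2)) * d) ∧
     φ (L/2) = φ (-L/2) ∧ deriv φ (L/2) = deriv φ (-L/2)) ↔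
    Real.tan (k*L/2) = -1/α := by
  have hαne : α ≠ 0 := by
    rw [hα]
    intro h
    apply hreg
    field_simp at h
    nlinarith [h]
  -- basic derivatives
  have hs' : ∀ z : ℝ, HasDerivAt (fun y => Real.sin (k*y)) (Real.cos (k*z) * k) z := by
    intro z
    exact ((Real.hasDerivAt_sin (k*z)).comp z ((hasDerivAt_id z).const_mul k)).congr_deriv (by simp)
  have hc' : ∀ z : ℝ, HasDerivAt (fun y => Real.cos (k*y)) (-Real.sin (k*z) * k) z := by
    intro z
    exact ((Real.hasDerivAt_cos (k*z)).comp z ((hasDerivAt_id z).const_mul k)).congr_deriv (by simp)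
  have hsign : ∀ x : ℝ, x ≠ 0 → ∀ᶠ y in 𝓝 x, Real.sign y = Real.sign x := by
    intro x hx
    rcases hx.lt_or_gt with h | h
    · filter_upwards [Iio_mem_nhds h] with y hy
      rw [Real.sign_of_neg hy, Real.sign_of_neg h]
    · filter_upwards [Ioi_mem_nhds h] with y hy
      rw [Real.sign_of_pos hy, Real.sign_of_pos h]
  -- first derivative away from 0
  have hA : ∀ x : ℝ, x ≠ 0 → deriv φ x
      = Real.sign x * (-Real.sin (k*x) * k) + α * (Real.cos (k*x) * k) := by
    intro x hx
    have hev : φ =ᶠ[𝓝 x] fun y => Real.sign x * Real.cos (k*y) + α * Real.sin (k*y) := by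
      filter_upwards [hsign x hx] with y hy
      rw [hφ y, hy]
    rw [hev.deriv_eq]
    exact (((hc' x).const_mul (Real.sign x)).add ((hs' x).const_mul α)).deriv
  -- second derivative condition
  have hODE : ∀ x, x ≠ 0 → deriv (deriv φ) x + k^2 * φ x = 0 := by
    intro x hx
    have hev2 : deriv φ =ᶠ[𝓝 x] fun y =>
        (-(Real.sign x * k)) * Real.sin (k*y) + (α*k) * Real.cos (k*y) := by
      rcases hx.lt_or_gt with h | h
      · filter_upwards [Iio_mem_nhds h, hsign x hx] with y hy hy'
        rw [hA y hy.ne, hy']; ring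
      · filter_upwards [Ioi_mem_nhds h, hsign x hx] with y hy hy'
        rw [hA y hy.ne', hy']; ring
    rw [hev2.deriv_eq,
      (show HasDerivAt (fun y => (-(Real.sign x * k)) * Real.sin (k*y) + (α*k) * Real.cos (k*y)) _ x from ((hs' x).const_mul (-(Real.sign x * k))).add ((hc' x).const_mul (α*k))).deriv, hφ x]
    ring
  -- jump condition
  have hjump : ∃ pP pM d : ℝ, Tendsto φ (𝓝[>] (0:ℝ)) (𝓝 pP) ∧
      Tendsto φ (𝓝[<] (0:ℝ)) (𝓝 pM) ∧
      Tendsto (deriv φ) (𝓝[≠] (0:ℝ)) (𝓝 d) ∧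
      pP - pM = (4/(c - k^2*ν^2)) * d := by
    refine ⟨1, -1, α * k, ?_, ?_, ?_, ?_⟩
    · have hcont : Tendsto (fun y => Real.cos (k*y) + α * Real.sin (k*y)) (𝓝[>] (0:ℝ)) (𝓝 1) := by
        have hco : Continuous (fun y : ℝ => Real.cos (k*y) + α * Real.sin (k*y)) := by fun_prop
        have := hco.tendsto 0
        simp only [mul_zero, Real.cos_zero, Real.sin_zero, mul_zero, add_zero] at this
        exact this.mono_left nhdsWithin_le_nhds
      refine hcont.congr' ?_
      filter_upwards [self_mem_nhdsWithin] with y (hy : (0:ℝ) < y)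
      rw [hφ y, Real.sign_of_pos hy, one_mul]
    · have hcont : Tendsto (fun y => -Real.cos (k*y) + α * Real.sin (k*y)) (𝓝[<] (0:ℝ)) (𝓝 (-1)) := by
        have hco : Continuous (fun y : ℝ => -Real.cos (k*y) + α * Real.sin (k*y)) := by fun_prop
        have := hco.tendsto 0
        simp only [mul_zero, Real.cos_zero, Real.sin_zero, mul_zero, add_zero] at this
        exact this.mono_left nhdsWithin_le_nhds
      refine hcont.congr' ?_
      filter_upwards [self_mem_nhdsWithin] with y (hy : y < (0:ℝ))
      rw [hφ y, Real.sign_of_neg hy]; ring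
    · have h1 : Tendsto (fun y => Real.sign y * (-Real.sin (k*y) * k)) (𝓝[≠] (0:ℝ)) (𝓝 0) := by
        have hb : ∀ y : ℝ, ‖Real.sign y * (-Real.sin (k*y) * k)‖ ≤ |(-Real.sin (k*y) * k)| := by
          intro y
          rw [Real.norm_eq_abs, abs_mul]
          have : |Real.sign y| ≤ 1 := by
            rcases Real.sign_apply_eq y with h | h | h <;> rw [h] <;> norm_num
          nlinarith [abs_nonneg (-Real.sin (k*y) * k), abs_nonneg (Real.sign y)]
        have ht : Tendsto (fun y => |(-Real.sin (k*y) * k)|) (𝓝[≠] (0:ℝ)) (𝓝 0) := by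
          have hco : Continuous (fun y : ℝ => |(-Real.sin (k*y) * k)|) := by fun_prop
          have := hco.tendsto 0
          simp only [mul_zero, Real.sin_zero, neg_zero, zero_mul, abs_zero] at this
          exact this.mono_left nhdsWithin_le_nhds
        exact squeeze_zero_norm hb ht
      have h2 : Tendsto (fun y => α * (Real.cos (k*y) * k)) (𝓝[≠] (0:ℝ)) (𝓝 (α * k)) := by
        have hco : Continuous (fun y : ℝ => α * (Real.cos (k*y) * k)) := by fun_prop
        have := hco.tendsto 0
        simp only [mul_zero, Real.cos_zero, one_mul] at this
        exact this.mono_left nhdsWithin_le_nhds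
      have hsum := h1.add h2
      rw [zero_add] at hsum
      refine hsum.congr' ?_
      filter_upwards [self_mem_nhdsWithin] with y (hy : y ≠ 0)
      exact (hA y hy).symm
    · rw [hα]; field_simp; ring
  -- derivative periodicity always holds
  have hLpos : (0:ℝ) < L/2 := by linarith
  have hder_per : deriv φ (L/2) = deriv φ (-L/2) := by
    rw [hA (L/2) hLpos.ne', hA (-L/2) (by linarith : -L/2 < 0).ne,
      Real.sign_of_pos hLpos, Real.sign_of_neg (by linarith : -L/2 < 0),
      show k * (-L/2) = -(k*(L/2)) by ring, Real.sin_neg, Real.cos_neg]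
    ring
  have hval : φ (L/2) = Real.cos (k*L/2) + α * Real.sin (k*L/2) := by
    rw [hφ, Real.sign_of_pos hLpos, one_mul, show k*(L/2) = k*L/2 by ring]
  have hval' : φ (-L/2) = -(Real.cos (k*L/2) + α * Real.sin (k*L/2)) := by
    rw [hφ, Real.sign_of_neg (by linarith : -L/2 < 0),
      show k * (-L/2) = -(k*L/2) by ring, Real.sin_neg, Real.cos_neg]
    ring
  set θ := k*L/2 with hθ
  constructor
  · rintro ⟨-, -, hper, -⟩
    rw [hval, hval'] at hper
    have hzero : Real.cos θ + α * Real.sin θ = 0 := by linarith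
    have hcos : Real.cos θ ≠ 0 := by
      intro h
      rw [h, zero_add] at hzero
      have hsin : Real.sin θ = 0 := by
        rcases mul_eq_zero.mp hzero with h' | h'
        · exact absurd h' hαne
        · exact h'
      nlinarith [Real.sin_sq_add_cos_sq θ]
    rw [Real.tan_eq_sin_div_cos]
    have hsin : Real.sin θ ≠ 0 := by
      intro h
      rw [h, mul_zero, add_zero] at hzero
      exact hcos hzero
    field_simp
    nlinarith [hzero]
  · intro htan
    refine ⟨hODE, hjump, ?_, hder_per⟩
    rw [hval, hval']
    have hcos : Real.cos θ ≠ 0 := by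
      intro h
      rw [Real.tan_eq_sin_div_cos, h, div_zero] at htan
      have : (-1:ℝ)/α ≠ 0 := by
        simp [hαne]
      exact this htan.symm
    rw [Real.tan_eq_sin_div_cos] at htan
    have hzero : Real.cos θ + α * Real.sin θ = 0 := by
      field_simp at htan
      nlinarith [htan]
    linarith
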